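/- arXiv:2403.06263 — 4 statements merged into one kernel-verified Lean document; each statement's English description precedes it below -/
import Mathlib

section
/- For every n ≥ 1, the polynomial x^2 + x - 1 divides x^(2(2n+1)) + N·x^(2n+1) - 1 in ℤ[x], where N = (2n+1) + Σ_{r=1}^{n} [ C(n+r, 2r+1) + C(n+r+1, 2r+1) ]. -/
open Polynomial Finset

def Tb (n : ℕ) : ℕ := ∑ r ∈ Finset.range (n+1), (n+r).choose (2*r+1)
def Vb (n : ℕ) : ℕ := ∑ r ∈ Finset.range (n+1), (n+r).choose (2*r)

lemma Tb_succ (n : ℕ) : Tb (n+1) = Tb n + Vb n := by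
  have h1 : Tb (n+1)
      = ∑ r ∈ Finset.range (n+2), ((n+r).choose (2*r) + (n+r).choose (2*r+1)) := by
    unfold Tb
    refine Finset.sum_congr rfl fun r _ => ?_
    have : n+1+r = (n+r)+1 := by ring
    rw [this, Nat.choose_succ_succ]
  have z1 : (n+(n+1)).choose (2*(n+1)) = 0 := Nat.choose_eq_zero_of_lt (by omega)
  have z2 : (n+(n+1)).choose (2*(n+1)+1) = 0 := Nat.choose_eq_zero_of_lt (by omega)
  have A : ∑ r ∈ Finset.range (n+2), (n+r).choose (2*r) = Vb n := by
    unfold Vb; rw [Finset.sum_range_succ _ (n+1), z1]; omega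
  have B : ∑ r ∈ Finset.range (n+2), (n+r).choose (2*r+1) = Tb n := by
    unfold Tb; rw [Finset.sum_range_succ _ (n+1), z2]; omega
  rw [h1, Finset.sum_add_distrib, A, B]
  omega

lemma Vb_succ (n : ℕ) : Vb (n+1) = Vb n + Tb (n+1) := by
  have h1 : Vb (n+1) = ∑ s ∈ Finset.range (n+1), (n+1+(s+1)).choose (2*(s+1)) + (n+1+0).choose (2*0) :=
    Finset.sum_range_succ' _ (n+1)
  have h2 : ∑ s ∈ Finset.range (n+1), (n+1+(s+1)).choose (2*(s+1))
      = ∑ s ∈ Finset.range (n+1), ((n+1+s).choose (2*s+1) + (n+1+s).choose (2*s+2)) :=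
    Finset.sum_congr rfl fun s _ => by
      have e1 : n+1+(s+1) = (n+1+s)+1 := by ring
      have e2 : 2*(s+1) = (2*s+1)+1 := by ring
      rw [e1, e2, Nat.choose_succ_succ]
  rw [Finset.sum_add_distrib] at h2
  have h3 : ∑ s ∈ Finset.range (n+1), (n+1+s).choose (2*s+1) = Tb (n+1) := by
    unfold Tb
    rw [Finset.sum_range_succ _ (n+1)]
    have z : (n+1+(n+1)).choose (2*(n+1)+1) = 0 := Nat.choose_eq_zero_of_lt (by omega)
    omega
  have h5 : ∑ s ∈ Finset.range (n+1), (n+1+s).choose (2*s+2) = ∑ s ∈ Finset.range n, (n+1+s).choose (2*s+2) := by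
    rw [Finset.sum_range_succ _ n]
    have z : (n+1+n).choose (2*n+2) = 0 := Nat.choose_eq_zero_of_lt (by omega)
    omega
  have h4 : Vb n = ∑ s ∈ Finset.range n, (n+1+s).choose (2*s+2) + 1 := by
    unfold Vb
    rw [Finset.sum_range_succ' _ n]
    have e' : ∑ s ∈ Finset.range n, (n+(s+1)).choose (2*(s+1)) = ∑ s ∈ Finset.range n, (n+1+s).choose (2*s+2) :=
      Finset.sum_congr rfl fun s _ => by congr 1 <;> ring
    have c : (n+0).choose (2*0) = 1 := by simp
    omega
  have c0 : (n+1+0).choose (2*0) = 1 := by simp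
  omega

def Lu (n : ℕ) : ℕ := Tb n + Tb (n+1)

lemma Tb_rec (n : ℕ) : Tb (n+2) + Tb n = 3 * Tb (n+1) := by
  have h1 : Tb (n+2) = Tb (n+1) + Vb (n+1) := Tb_succ (n+1)
  have h2 := Vb_succ n
  have h3 := Tb_succ n
  omega

lemma Lu_rec (n : ℕ) : Lu (n+2) + Lu n = 3 * Lu (n+1) := by
  have h1 := Tb_rec n
  have h2 : Tb (n+3) + Tb (n+1) = 3 * Tb (n+2) := Tb_rec (n+1)
  unfold Lu
  have e : n+2+1 = n+3 := rfl
  have e2 : n+1+1 = n+2 := rfl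
  rw [e, e2]
  omega

lemma Lu0 : Lu 0 = 1 := by decide
lemma Lu1 : Lu 1 = 4 := by decide

lemma poldvd : ∀ k : ℕ, (X^2 + X - 1 : ℤ[X]) ∣ X^(2*(2*k+1)) + (Lu k : ℤ[X]) * X^(2*k+1) - 1 := by
  have key : ∀ k : ℕ,
      ((X^2 + X - 1 : ℤ[X]) ∣ X^(2*(2*k+1)) + (Lu k : ℤ[X]) * X^(2*k+1) - 1) ∧
      ((X^2 + X - 1 : ℤ[X]) ∣ X^(2*(2*(k+1)+1)) + (Lu (k+1) : ℤ[X]) * X^(2*(k+1)+1) - 1) := by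
    intro k
    induction k with
    | zero =>
      constructor
      · refine ⟨1, ?_⟩
        rw [Lu0]; push_cast; ring
      · refine ⟨X^4 - X^3 + 2*X^2 + X + 1, ?_⟩
        rw [Lu1]; push_cast; ring
    | succ k ih =>
      refine ⟨ih.2, ?_⟩
      obtain ⟨q2, h2⟩ := ih.1
      obtain ⟨q1, h1⟩ := ih.2
      have hc : (Lu (k+2) : ℤ[X]) = 3 * (Lu (k+1) : ℤ[X]) - (Lu k : ℤ[X]) := by
        have h := Lu_rec k
        have h' : ((Lu (k+2) + Lu k : ℕ) : ℤ[X]) = ((3 * Lu (k+1) : ℕ) : ℤ[X]) := by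
          exact_mod_cast congrArg (fun m : ℕ => (m : ℤ[X])) h
        push_cast at h'
        linear_combination h'
      refine ⟨3*X^2*q1 - X^4*q2 + (X^(4*k+6)-1)*(X^2-X-1), ?_⟩
      have e : k+1+1 = k+2 := rfl
      rw [e, hc]
      linear_combination (3*X^2 : ℤ[X]) * h1 - (X^4 : ℤ[X]) * h2
  exact fun k => (key k).1

theorem stmt_1 (n : ℕ) (hn : 1 ≤ n)
    (N : ℕ)
    (hN : N = (2*n+1) + ∑ r ∈ Finset.Icc 1 n, ((n+r).choose (2*r+1) + (n+r+1).choose (2*r+1))) :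
    (X^2 + X - 1 : ℤ[X]) ∣ X^(2*(2*n+1)) + (N : ℤ[X]) * X^(2*n+1) - 1 := by
  have hNL : N = Lu n := by
    have hsplit : ∑ r ∈ Finset.Icc 1 n, ((n+r).choose (2*r+1) + (n+r+1).choose (2*r+1))
        = (∑ r ∈ Finset.Icc 1 n, (n+r).choose (2*r+1)) + ∑ r ∈ Finset.Icc 1 n, (n+r+1).choose (2*r+1) :=
      Finset.sum_add_distrib
    have hicc : ∀ f : ℕ → ℕ, ∑ r ∈ Finset.Icc 1 n, f r = ∑ s ∈ Finset.range n, f (1+s) := by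
      intro f
      rw [← Finset.Ico_add_one_right_eq_Icc, Finset.sum_Ico_eq_sum_range]
      simp
    have e1 : ∑ r ∈ Finset.Icc 1 n, (n+r).choose (2*r+1) + n = Tb n := by
      rw [hicc]
      unfold Tb
      rw [Finset.sum_range_succ' _ n]
      have e' : ∑ s ∈ Finset.range n, (n+(1+s)).choose (2*(1+s)+1) = ∑ s ∈ Finset.range n, (n+(s+1)).choose (2*(s+1)+1) :=
        Finset.sum_congr rfl fun s _ => by congr 1 <;> ring
      have c1 : (n+0).choose (2*0+1) = n := by simp
      omega
    have e2 : ∑ r ∈ Finset.Icc 1 n, (n+r+1).choose (2*r+1) + (n+1) = Tb (n+1) := by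
      rw [hicc]
      unfold Tb
      rw [Finset.sum_range_succ _ (n+1), Finset.sum_range_succ' _ n]
      have z : (n+1+(n+1)).choose (2*(n+1)+1) = 0 := Nat.choose_eq_zero_of_lt (by omega)
      have e' : ∑ s ∈ Finset.range n, (n+(1+s)+1).choose (2*(1+s)+1) = ∑ s ∈ Finset.range n, (n+1+(s+1)).choose (2*(s+1)+1) :=
        Finset.sum_congr rfl fun s _ => by congr 1 <;> ring
      have c1 : (n+1+0).choose (2*0+1) = n+1 := by simp
      omega
    unfold Lu
    omega
  rw [hNL]
  exact poldvd n
end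

section
/- For every n ≥ 1, (2n+1) + Σ_{r=1}^{n} [ C(n+r, 2r+1) + C(n+r+1, 2r+1) ] = F_{2n} + F_{2n+2}, where F_k denotes the k-th Fibonacci number. -/
lemma fib_choose_sums (n : ℕ) :
    (∑ r ∈ Finset.range (n+1), (n+r).choose (2*r+1) = Nat.fib (2*n)) ∧
    (∑ r ∈ Finset.range (n+1), (n+r).choose (2*r) = Nat.fib (2*n+1)) := by
  induction n with
  | zero => simp
  | succ n ih =>
    obtain ⟨hA, hB⟩ := ih
    have hA' : ∑ r ∈ Finset.range (n+2), (n+1+r).choose (2*r+1)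
        = Nat.fib (2*(n+1)) := by
      have hsplit : ∀ r, (n+1+r).choose (2*r+1)
          = (n+r).choose (2*r) + (n+r).choose (2*r+1) := by
        intro r
        have : n+1+r = (n+r)+1 := by ring
        rw [this, Nat.choose_succ_succ]
      have e1 : ∑ r ∈ Finset.range (n+2), (n+1+r).choose (2*r+1)
          = (∑ r ∈ Finset.range (n+2), (n+r).choose (2*r))
            + ∑ r ∈ Finset.range (n+2), (n+r).choose (2*r+1) := by
        rw [← Finset.sum_add_distrib]
        exact Finset.sum_congr rfl fun r _ => hsplit r
      have e2 : ∑ r ∈ Finset.range (n+2), (n+r).choose (2*r)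
          = (∑ r ∈ Finset.range (n+1), (n+r).choose (2*r)) + (n+(n+1)).choose (2*(n+1)) :=
        Finset.sum_range_succ _ _
      have e3 : ∑ r ∈ Finset.range (n+2), (n+r).choose (2*r+1)
          = (∑ r ∈ Finset.range (n+1), (n+r).choose (2*r+1)) + (n+(n+1)).choose (2*(n+1)+1) :=
        Finset.sum_range_succ _ _
      have z2 : (n+(n+1)).choose (2*(n+1)) = 0 := Nat.choose_eq_zero_of_lt (by omega)
      have z3 : (n+(n+1)).choose (2*(n+1)+1) = 0 := Nat.choose_eq_zero_of_lt (by omega)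
      have efib : Nat.fib (2*(n+1)) = Nat.fib (2*n) + Nat.fib (2*n+1) := by
        have e : 2*(n+1) = (2*n)+2 := by ring
        rw [e, Nat.fib_add_two]
      omega
    refine ⟨hA', ?_⟩
    -- B(n+1)
    have hpeel : ∑ r ∈ Finset.range (n+2), (n+1+r).choose (2*r)
        = (∑ s ∈ Finset.range (n+1), (n+1+(s+1)).choose (2*(s+1))) + (n+1+0).choose (2*0) :=
      Finset.sum_range_succ' _ _
    have hsplit2 : ∑ s ∈ Finset.range (n+1), (n+1+(s+1)).choose (2*(s+1))
        = (∑ s ∈ Finset.range (n+1), (n+1+s).choose (2*s+1))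
          + ∑ s ∈ Finset.range (n+1), (n+1+s).choose (2*s+2) := by
      rw [← Finset.sum_add_distrib]
      refine Finset.sum_congr rfl fun s _ => ?_
      have h1 : n+1+(s+1) = (n+1+s)+1 := by ring
      have h2 : 2*(s+1) = (2*s+1)+1 := by ring
      rw [h1, h2, Nat.choose_succ_succ]
    have hAsum : (∑ s ∈ Finset.range (n+1), (n+1+s).choose (2*s+1))
          + (n+1+(n+1)).choose (2*(n+1)+1)
        = ∑ r ∈ Finset.range (n+2), (n+1+r).choose (2*r+1) :=
      (Finset.sum_range_succ _ _).symm
    have zA : (n+1+(n+1)).choose (2*(n+1)+1) = 0 := Nat.choose_eq_zero_of_lt (by omega)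
    -- relate ∑ (n+1+s).choose (2*s+2) to B(n)
    have hBpeel : ∑ r ∈ Finset.range (n+2), (n+r).choose (2*r)
        = (∑ s ∈ Finset.range (n+1), (n+(s+1)).choose (2*(s+1))) + (n+0).choose (2*0) :=
      Finset.sum_range_succ' _ _
    have hBtop : ∑ r ∈ Finset.range (n+2), (n+r).choose (2*r)
        = (∑ r ∈ Finset.range (n+1), (n+r).choose (2*r)) + (n+(n+1)).choose (2*(n+1)) :=
      Finset.sum_range_succ _ _
    have zB : (n+(n+1)).choose (2*(n+1)) = 0 := Nat.choose_eq_zero_of_lt (by omega)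
    have hcongr : ∑ s ∈ Finset.range (n+1), (n+(s+1)).choose (2*(s+1))
        = ∑ s ∈ Finset.range (n+1), (n+1+s).choose (2*s+2) := by
      refine Finset.sum_congr rfl fun s _ => ?_
      congr 1 <;> ring
    have hz0 : (n+0).choose (2*0) = 1 := by simp
    have hz0' : (n+1+0).choose (2*0) = 1 := by simp
    have efib : Nat.fib (2*(n+1)+1) = Nat.fib (2*n+1) + Nat.fib (2*(n+1)) := by
      have e2 : 2*(n+1)+1 = (2*n+1)+2 := by ring
      have e1 : (2*n+1)+1 = 2*(n+1) := by ring
      rw [e2, Nat.fib_add_two, e1]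
    show ∑ r ∈ Finset.range (n+2), (n+1+r).choose (2*r) = Nat.fib (2*(n+1)+1)
    omega

theorem stmt_2 (n : ℕ) (hn : 1 ≤ n) :
    (2*n+1) + ∑ r ∈ Finset.Icc 1 n, ((n+r).choose (2*r+1) + (n+r+1).choose (2*r+1))
      = Nat.fib (2*n) + Nat.fib (2*n+2) := by
  have hA := (fib_choose_sums n).1
  have hA2 := (fib_choose_sums (n+1)).1
  have key : ∀ (g : ℕ → ℕ) (m : ℕ),
      ∑ r ∈ Finset.range (m+1), g r = g 0 + ∑ r ∈ Finset.Icc 1 m, g r := by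
    intro g m
    rw [Finset.sum_range_succ' g m, ← Finset.Ico_add_one_right_eq_Icc, Finset.sum_Ico_eq_sum_range]
    simp [add_comm]
  have h1 : ∑ r ∈ Finset.range (n+1), (n+r).choose (2*r+1)
      = n + ∑ r ∈ Finset.Icc 1 n, (n+r).choose (2*r+1) := by
    rw [key]; simp
  have h2 : ∑ r ∈ Finset.range (n+1+1), (n+1+r).choose (2*r+1)
      = (n+1) + ∑ r ∈ Finset.Icc 1 n, (n+r+1).choose (2*r+1) := by
    rw [key]
    rw [Finset.sum_Icc_succ_top (a := 1) (b := n) (by omega)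
      (fun r => (n+1+r).choose (2*r+1))]
    rw [Nat.choose_eq_zero_of_lt (show 2*(n+1)+1 > n+1+(n+1) by omega)]
    have hc : ∑ r ∈ Finset.Icc 1 n, (n+1+r).choose (2*r+1)
        = ∑ r ∈ Finset.Icc 1 n, (n+r+1).choose (2*r+1) :=
      Finset.sum_congr rfl fun r _ => by rw [show n+1+r = n+r+1 by ring]
    rw [hc]
    simp
  rw [h1] at hA
  rw [h2] at hA2
  rw [Finset.sum_add_distrib]
  have h3 : 2*(n+1) = 2*n+2 := by ring
  rw [h3] at hA2
  omega
end

section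
/- Let F_n(a,b) be the bivariate Fibonacci polynomials (F_0 = 0, F_1 = 1, F_{n+2} = a·F_{n+1} - b·F_n) and L_n(a,b) the Lucas polynomials (L_0 = 2, L_1 = a, same recursion). Then for every m ≥ 0, in ℤ[a,b][x]: x^(2m+2) - L_{m+1}(a,b)·x^(m+1) + b^(m+1) = (x^2 - a·x + b) · [ Σ_{j=0}^{m-1} F_{j+1}(a,b)·x^(2m-j) + Σ_{j=0}^{m} b^(m-j)·F_{j+1}(a,b)·x^j ]. -/
open Polynomial MvPolynomial Finset

noncomputable def a : MvPolynomial (Fin 2) ℤ := MvPolynomial.X 0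
noncomputable def b : MvPolynomial (Fin 2) ℤ := MvPolynomial.X 1

noncomputable def F : ℕ → MvPolynomial (Fin 2) ℤ
  | 0 => 0
  | 1 => 1
  | (n+2) => a * F (n+1) - b * F n

noncomputable def L : ℕ → MvPolynomial (Fin 2) ℤ
  | 0 => 2
  | 1 => a
  | (n+2) => a * L (n+1) - b * L n

lemma LF : ∀ m : ℕ, L (m+1) = F (m+2) - b * F m
  | 0 => by simp [L, F]
  | 1 => by simp [L, F]; ring
  | (m+2) => by
    have h1 := LF m
    have h2 := LF (m+1)
    have e1 : L (m+3) = a * L (m+2) - b * L (m+1) := rfl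
    have e2 : F (m+4) = a * F (m+3) - b * F (m+2) := rfl
    have e3 : F (m+3) = a * F (m+2) - b * F (m+1) := rfl
    have e4 : F (m+1+2) = a * F (m+2) - b * F (m+1) := rfl
    have e5 : F (m+2) = a * F (m+1) - b * F m := rfl
    rw [e1, h1, h2, e4, e2, e3, e5]; ring

lemma QA (m : ℕ) :
    ((Polynomial.X^2 - Polynomial.C a * Polynomial.X + Polynomial.C b)
      * ∑ j ∈ Finset.range m, Polynomial.C (F (j+1)) * Polynomial.X^(2*m-j)
      : Polynomial (MvPolynomial (Fin 2) ℤ))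
    = Polynomial.X^(2*m+2) - Polynomial.C (F (m+1)) * Polynomial.X^(m+2)
      + Polynomial.C (b * F m) * Polynomial.X^(m+1) := by
  induction m with
  | zero => simp [F]
  | succ m ih =>
    have hsum : (∑ j ∈ Finset.range (m+1), Polynomial.C (F (j+1)) * Polynomial.X^(2*(m+1)-j)
        : Polynomial (MvPolynomial (Fin 2) ℤ))
        = Polynomial.X^2 * ∑ j ∈ Finset.range m, Polynomial.C (F (j+1)) * Polynomial.X^(2*m-j)
          + Polynomial.C (F (m+1)) * Polynomial.X^(m+2) := by
      rw [Finset.sum_range_succ, Finset.mul_sum]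
      refine congrArg₂ (· + ·) ?_ ?_
      · apply Finset.sum_congr rfl
        intro j hj
        have hj' : j < m := Finset.mem_range.mp hj
        rw [show 2*(m+1)-j = (2*m-j)+2 from by omega, pow_add]
        ring
      · rw [show 2*(m+1)-m = m+2 from by omega]
    rw [hsum, mul_add, mul_left_comm, ih]
    have hF : F (m+2) = a * F (m+1) - b * F m := by rfl
    have hF2 : Polynomial.C (F (m+2)) = Polynomial.C a * Polynomial.C (F (m+1))
        - Polynomial.C b * Polynomial.C (F m) := by rw [hF, map_sub, map_mul, map_mul]
    simp only [map_mul, hF2]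
    ring

lemma QB (m : ℕ) :
    ((Polynomial.X^2 - Polynomial.C a * Polynomial.X + Polynomial.C b)
      * ∑ j ∈ Finset.range (m+1), Polynomial.C (b^(m-j) * F (j+1)) * Polynomial.X^j
      : Polynomial (MvPolynomial (Fin 2) ℤ))
    = Polynomial.C (F (m+1)) * Polynomial.X^(m+2) + Polynomial.C (b^(m+1))
      - Polynomial.C (F (m+2)) * Polynomial.X^(m+1) := by
  induction m with
  | zero => simp [F]; ring
  | succ m ih =>
    have hsum : (∑ j ∈ Finset.range (m+2), Polynomial.C (b^(m+1-j) * F (j+1)) * Polynomial.X^j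
        : Polynomial (MvPolynomial (Fin 2) ℤ))
        = Polynomial.C b * ∑ j ∈ Finset.range (m+1), Polynomial.C (b^(m-j) * F (j+1)) * Polynomial.X^j
          + Polynomial.C (F (m+2)) * Polynomial.X^(m+1) := by
      rw [Finset.sum_range_succ, Finset.mul_sum]
      refine congrArg₂ (· + ·) ?_ ?_
      · apply Finset.sum_congr rfl
        intro j hj
        have hj' : j < m+1 := Finset.mem_range.mp hj
        rw [show m+1-j = (m-j)+1 from by omega, pow_succ]
        simp only [map_mul]
        ring
      · rw [show m+1-(m+1) = 0 from by omega]
        simp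
    rw [hsum, mul_add, mul_left_comm, ih]
    have hF : F (m+3) = a * F (m+2) - b * F (m+1) := by rfl
    have hF2 : Polynomial.C (F (m+3)) = Polynomial.C a * Polynomial.C (F (m+2))
        - Polynomial.C b * Polynomial.C (F (m+1)) := by rw [hF, map_sub, map_mul, map_mul]
    simp only [map_mul, map_pow, hF2]
    ring

theorem stmt_8 (m : ℕ) :
    (Polynomial.X^(2*m+2) - Polynomial.C (L (m+1)) * Polynomial.X^(m+1)
        + Polynomial.C (b^(m+1)) : Polynomial (MvPolynomial (Fin 2) ℤ))
      = (Polynomial.X^2 - Polynomial.C a * Polynomial.X + Polynomial.C b)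
        * (∑ j ∈ Finset.range m, Polynomial.C (F (j+1)) * Polynomial.X^(2*m-j)
          + ∑ j ∈ Finset.range (m+1), Polynomial.C (b^(m-j) * F (j+1)) * Polynomial.X^j) := by
  rw [mul_add, QA, QB, LF]
  simp only [map_sub, map_mul, map_pow]
  ring
end

section
/- For every m ≥ 0 and Fibonacci numbers F_k, in ℤ[x]: x^(2m+2) + (-1)^m·(F_m + F_{m+2})·x^(m+1) + (-1)^(m+1) = (x^2 + x - 1) · [ Σ_{j=0}^{m-1} (-1)^j·F_{j+1}·x^(2m-j) + (-1)^m · Σ_{j=0}^{m} F_{j+1}·x^j ]. -/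
open Polynomial Finset

lemma lemA (m : ℕ) :
    ((X^2 + X - 1 : ℤ[X]) * ∑ j ∈ Finset.range (m+1), C ((Nat.fib (j+1) : ℤ)) * X^j)
      = C ((Nat.fib (m+1) : ℤ)) * X^(m+2) + C ((Nat.fib (m+2) : ℤ)) * X^(m+1) - 1 := by
  induction m with
  | zero => simp [Finset.sum_range_one]
  | succ n ih =>
      rw [Finset.sum_range_succ, mul_add, ih]
      have h : (Nat.fib (n+3) : ℤ) = Nat.fib (n+2) + Nat.fib (n+1) := by
        rw [Nat.fib_add_two]; push_cast; ring
      rw [show n+1+2 = n+3 by ring, h]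
      simp only [C_add, C_mul, C_neg, C_1, map_natCast]
      ring

lemma lemB (m : ℕ) :
    ((X^2 + X - 1 : ℤ[X]) * ∑ j ∈ Finset.range m, C ((-1)^j * (Nat.fib (j+1) : ℤ)) * X^(2*m-j))
      = X^(2*m+2) - C ((-1)^m * (Nat.fib (m+1) : ℤ)) * X^(m+2)
        + C ((-1)^m * (Nat.fib m : ℤ)) * X^(m+1) := by
  induction m with
  | zero => simp
  | succ n ih =>
      have hs : (∑ j ∈ Finset.range (n+1), C ((-1)^j * (Nat.fib (j+1) : ℤ)) * X^(2*(n+1)-j))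
          = X^2 * (∑ j ∈ Finset.range n, C ((-1)^j * (Nat.fib (j+1) : ℤ)) * X^(2*n-j))
            + C ((-1)^n * (Nat.fib (n+1) : ℤ)) * X^(n+2) := by
        rw [Finset.sum_range_succ, Finset.mul_sum, show 2*(n+1)-n = n+2 from by omega]
        congr 1
        apply Finset.sum_congr rfl
        intro j hj
        have hj' : j < n := Finset.mem_range.mp hj
        rw [show 2*(n+1)-j = (2*n-j) + 2 from by omega, pow_add]
        ring
      rw [hs, mul_add (X^2 + X - 1 : ℤ[X]) _ _, mul_left_comm, ih]
      have h : (Nat.fib (n+2) : ℤ) = Nat.fib (n+1) + Nat.fib n := by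
        rw [Nat.fib_add_two]; push_cast; ring
      rw [show n+1+1 = n+2 by ring, h, show 2*(n+1)+2 = (2*n+2)+2 from by ring]
      simp only [C_add, C_mul, C_neg, C_1, map_pow, map_natCast]
      ring

theorem stmt_13 (m : ℕ) :
    (X^(2*m+2) + C ((-1)^m * ((Nat.fib m : ℤ) + Nat.fib (m+2))) * X^(m+1)
        + C ((-1)^(m+1)) : ℤ[X])
      = (X^2 + X - 1)
        * (∑ j ∈ Finset.range m, C ((-1)^j * (Nat.fib (j+1) : ℤ)) * X^(2*m-j)
          + C ((-1)^m) * ∑ j ∈ Finset.range (m+1), C ((Nat.fib (j+1) : ℤ)) * X^j) := by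
  rw [mul_add (X^2 + X - 1 : ℤ[X]) _ _, lemB, mul_comm (X^2+X-1 : ℤ[X]) (C ((-1:ℤ)^m) * _),
    mul_assoc, mul_comm _ (X^2+X-1 : ℤ[X]), lemA]
  have h : (Nat.fib (m+2) : ℤ) = Nat.fib (m+1) + Nat.fib m := by
    rw [Nat.fib_add_two]; push_cast; ring
  rw [h]
  simp only [C_add, C_mul, C_neg, C_1, map_pow, map_natCast]
  ring
end
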